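/- (Bitrace / dual Pieri for the q_m basis) In symmetric functions over ℚ(t), with q_m = Σ_{λ⊢m} p_λ/z_λ(t) and q_k^* the Hall-adjoint of multiplication by q_k, one has for any k ≥ 1 and any composition μ = (μ_1,...,μ_l): q_k^*(q_{μ_1} ⋯ q_{μ_l}) = Σ_{τ ⊨ k} (∏_{a : τ_a > 0} (τ_a)_t) · q_{μ_1 - τ_1} ⋯ q_{μ_l - τ_l}, where τ = (τ_1,...,τ_l) runs over all tuples of nonnegative integers summing to k, (m)_t = (t-1)^2[m]_{t^2}, and q_j = 0 for j < 0. -/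

import Mathlib

open Finset MvPolynomial

noncomputable section

/-- The base field `ℚ(t)`. -/
abbrev F : Type := RatFunc ℚ

/-- The indeterminate `t` of `ℚ(t)`. -/
def tq : F := RatFunc.X

/-- The ring of symmetric functions over `ℚ(t)`, modelled as the polynomial
algebra on the power sums: the variable `n` represents the power sum `p_n`. -/
abbrev SymF : Type := MvPolynomial ℕ F

/-- `p_λ = ∏_i p_{λ_i}`. -/
def pPoly (s : Multiset ℕ) : SymF := (s.map fun i => (X i : SymF)).prod

/-- `z_λ = ∏_i i^{m_i(λ)} m_i(λ)!`. -/
def zNat (s : Multiset ℕ) : ℕ := s.prod * ∏ i ∈ s.toFinset, (s.count i).factorial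

/-- `q_m(x;t) = ∑_{λ ⊢ m} p_λ / z_λ(t)`. -/
def qq (t : F) (m : ℕ) : SymF :=
  ∑ lam : m.Partition,
    (((lam.parts.map fun i => 1 - t ^ i).prod) / (zNat lam.parts : F)) • pPoly lam.parts

/-- `q_m` for integer index, with `q_j = 0` for `j < 0`. -/
def qqInt (t : F) (m : ℤ) : SymF := if m < 0 then 0 else qq t m.toNat

/-- The Hall-adjoint `q_k^*` of multiplication by `q_k`: the coefficient of
`z^{-k}` in `exp(∑_{n≥1} (1-t^n)(∂/∂p_n) z^{-n})`. -/
def Dop (t : F) (k : ℕ) : Module.End F SymF :=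
  ∑ lam : k.Partition,
    (((lam.parts.map fun i => 1 - t ^ i).prod) /
        (∏ i ∈ lam.parts.toFinset, ((lam.parts.count i).factorial : F))) •
      (((lam.parts.sort (· ≤ ·)).map fun i =>
        (MvPolynomial.pderiv i : Derivation F SymF SymF).toLinearMap).prod)

/-- `(m)_t = (t-1)^2 [m]_{t^2}` for `m ≥ 1`, and `(0)_t = 1`. -/
def parT (t : F) (m : ℕ) : F :=
  if m = 0 then 1 else (t - 1) ^ 2 * ∑ j ∈ Finset.range m, t ^ (2 * j)

-- ### auxiliary infrastructure

/-- `pderiv` as an endomorphism. -/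
def pd (i : ℕ) : Module.End F SymF :=
  (MvPolynomial.pderiv i : Derivation F SymF SymF).toLinearMap

lemma pd_apply (i : ℕ) (f : SymF) : pd i f = MvPolynomial.pderiv i f := rfl

lemma pderiv_comm_aux (i j : ℕ) (f : SymF) :
    MvPolynomial.pderiv i (MvPolynomial.pderiv j f)
      = MvPolynomial.pderiv j (MvPolynomial.pderiv i f) := by
  induction f using MvPolynomial.induction_on with
  | C a => simp
  | add p q hp hq => simp [hp, hq]
  | mul_X p n hp =>
      have hXX : ∀ a b : ℕ, MvPolynomial.pderiv a ((MvPolynomial.pderiv b) (X n : SymF)) = 0 := by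
        intro a b; by_cases h : b = n <;> simp [h]
      simp only [pderiv_mul, map_add, hp, hXX]
      ring

lemma pd_commute (i j : ℕ) : Commute (pd i) (pd j) := by
  apply LinearMap.ext
  intro f
  exact pderiv_comm_aux i j f

/-- product of `pderiv`s over the sorted list of a multiset. -/
def Dm (s : Multiset ℕ) : Module.End F SymF := ((s.sort (· ≤ ·)).map pd).prod

lemma pairwise_commute_map_pd (l : List ℕ) : (l.map pd).Pairwise Commute := by
  induction l with
  | nil => simp
  | cons a l ih =>
      rw [List.map_cons, List.pairwise_cons]
      exact ⟨by rintro x hx; obtain ⟨b, -, rfl⟩ := List.mem_map.1 hx; exact pd_commute a b, ih⟩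

lemma Dm_eq_prod {s : Multiset ℕ} {l : List ℕ} (h : (l : Multiset ℕ) = s) :
    Dm s = (l.map pd).prod := by
  apply List.Perm.prod_eq'
  · exact (List.Perm.map pd (by rw [← Multiset.coe_eq_coe, Multiset.sort_eq, h]))
  · exact pairwise_commute_map_pd _
lemma Dm_zero : Dm 0 = 1 := by rw [Dm_eq_prod (l := []) (by simp)]; rfl

lemma Dm_cons (j : ℕ) (s : Multiset ℕ) : Dm (j ::ₘ s) = pd j * Dm s := by
  rw [Dm_eq_prod (l := j :: s.sort (· ≤ ·)) (by rw [← Multiset.cons_coe, Multiset.sort_eq]), List.map_cons, List.prod_cons]; rfl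

lemma Dop_def (t : F) (k : ℕ) :
    Dop t k = ∑ lam : k.Partition,
      (((lam.parts.map fun i => 1 - t ^ i).prod) /
        (∏ i ∈ lam.parts.toFinset, ((lam.parts.count i).factorial : F))) • Dm lam.parts := rfl


-- chunk 2: multiset weight lemmas + removal bijection
def Tprod (t : F) (s : Multiset ℕ) : F := (s.map fun i => 1 - t ^ i).prod

lemma Tprod_cons (t : F) (j : ℕ) (s : Multiset ℕ) :
    Tprod t (j ::ₘ s) = (1 - t ^ j) * Tprod t s := by simp [Tprod]

def MfactN (s : Multiset ℕ) : ℕ := ∏ i ∈ s.toFinset, (s.count i).factorial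

lemma MfactN_cons (j : ℕ) (s : Multiset ℕ) :
    MfactN (j ::ₘ s) = (s.count j + 1) * MfactN s := by
  have hcount : ∀ i ∈ s.toFinset.erase j, (j ::ₘ s).count i = s.count i := fun i hi =>
    Multiset.count_cons_of_ne (Finset.ne_of_mem_erase hi) _
  have hprod : ∏ i ∈ s.toFinset.erase j, ((j ::ₘ s).count i).factorial
      = ∏ i ∈ s.toFinset.erase j, (s.count i).factorial :=
    Finset.prod_congr rfl fun i hi => by rw [hcount i hi]
  unfold MfactN
  rw [Multiset.toFinset_cons]
  by_cases h : j ∈ s.toFinset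
  · rw [Finset.insert_eq_self.2 h, ← Finset.mul_prod_erase _ _ h, ← Finset.mul_prod_erase _ _ h,
      Multiset.count_cons_self, Nat.factorial_succ, hprod]
    ring
  · have hj0 : s.count j = 0 := by
      exact Multiset.count_eq_zero.2 (fun hs => h (Multiset.mem_toFinset.2 hs))
    have herase : s.toFinset.erase j = s.toFinset := Finset.erase_eq_self.2 h
    rw [Finset.prod_insert h, Multiset.count_cons_self, hj0]
    rw [herase] at hprod
    rw [hprod]
    simp
lemma zNat_cons (j : ℕ) (s : Multiset ℕ) :
    zNat (j ::ₘ s) = j * ((s.count j + 1) * zNat s) := by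
  have h1 : zNat (j ::ₘ s) = (j ::ₘ s).prod * MfactN (j ::ₘ s) := rfl
  have h2 : zNat s = s.prod * MfactN s := rfl
  rw [h1, h2, Multiset.prod_cons, MfactN_cons]
  ring

lemma pPoly_cons (j : ℕ) (s : Multiset ℕ) : pPoly (j ::ₘ s) = X j * pPoly s := by simp [pPoly]

lemma pPoly_zero : pPoly 0 = 1 := rfl

lemma zNat_pos {s : Multiset ℕ} (h : ∀ i ∈ s, 0 < i) : 0 < zNat s := by
  apply Nat.mul_pos
  · exact Multiset.prod_pos h
  · exact Finset.prod_pos fun i _ => Nat.factorial_pos _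

/-- Removing a part from a partition: the fundamental reindexing. -/
lemma sum_partition_removal {M : Type*} [AddCommMonoid M] (m : ℕ) (f : ℕ → Multiset ℕ → M) :
    (∑ lam : m.Partition, ∑ j ∈ lam.parts.toFinset, f j (lam.parts.erase j))
      = ∑ j ∈ Finset.Icc 1 m, ∑ rho : (m - j).Partition, f j rho.parts := by
  rw [Finset.sum_sigma', Finset.sum_sigma']
  refine Finset.sum_bij'
    (fun (x : Σ _lam : m.Partition, ℕ) hx =>
      (⟨x.2, ⟨x.1.parts.erase x.2, fun hi => x.1.parts_pos (Multiset.mem_of_mem_erase hi), by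
        have hmem : x.2 ∈ x.1.parts := Multiset.mem_toFinset.1 (Finset.mem_sigma.1 hx).2
        have hsum : x.2 + (x.1.parts.erase x.2).sum = m := by
          rw [← Multiset.sum_cons, Multiset.cons_erase hmem, x.1.parts_sum]
        omega⟩⟩ : Σ j : ℕ, (m - j).Partition))
    (fun (y : Σ j : ℕ, (m - j).Partition) hy =>
      (⟨⟨y.1 ::ₘ y.2.parts, fun hi => by
          rcases Multiset.mem_cons.1 hi with h | h
          · subst h; exact (Finset.mem_Icc.1 (Finset.mem_sigma.1 hy).1).1
          · exact y.2.parts_pos h, by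
          rw [Multiset.sum_cons, y.2.parts_sum]
          have := (Finset.mem_Icc.1 (Finset.mem_sigma.1 hy).1).2
          omega⟩, y.1⟩ : Σ _lam : m.Partition, ℕ))
    ?_ ?_ ?_ ?_ ?_
  · intro x hx
    have hmem : x.2 ∈ x.1.parts := Multiset.mem_toFinset.1 (Finset.mem_sigma.1 hx).2
    have hsum : x.2 + (x.1.parts.erase x.2).sum = m := by
      rw [← Multiset.sum_cons, Multiset.cons_erase hmem, x.1.parts_sum]
    refine Finset.mem_sigma.2 ⟨Finset.mem_Icc.2 ⟨?_, ?_⟩, Finset.mem_univ _⟩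
    · show 1 ≤ x.2
      exact x.1.parts_pos hmem
    · show x.2 ≤ m
      omega
  · intro y hy
    exact Finset.mem_sigma.2 ⟨Finset.mem_univ _,
      Multiset.mem_toFinset.2 (Multiset.mem_cons_self _ _)⟩
  · intro x hx
    have hmem : x.2 ∈ x.1.parts := Multiset.mem_toFinset.1 (Finset.mem_sigma.1 hx).2
    refine Sigma.ext ?_ ?_
    · apply Nat.Partition.ext
      simp [Multiset.cons_erase hmem]
    · exact heq_of_eq rfl
  · intro y hy
    refine Sigma.ext rfl (heq_of_eq ?_)
    apply Nat.Partition.ext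
    simp [Multiset.erase_cons_head]
  · intro x hx
    rfl
-- chunk 3: rewriting of definitions, values on constants and X
lemma qq_def (t : F) (m : ℕ) :
    qq t m = ∑ lam : m.Partition,
      (Tprod t lam.parts / (zNat lam.parts : F)) • pPoly lam.parts := rfl

lemma Dop_def' (t : F) (k : ℕ) :
    Dop t k = ∑ lam : k.Partition,
      (Tprod t lam.parts / (MfactN lam.parts : F)) • Dm lam.parts := by
  unfold Dop Tprod MfactN Dm
  push_cast
  rfl

lemma parts_default_zero : (default : Nat.Partition 0).parts = 0 := by
  rw [Multiset.eq_zero_iff_forall_notMem]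
  intro i hi
  have h1 := (default : Nat.Partition 0).parts_pos hi
  have h2 := (default : Nat.Partition 0).parts_sum
  have h3 := Multiset.single_le_sum (fun x _ => Nat.zero_le x) i hi
  omega

lemma qq_zero (t : F) : qq t 0 = 1 := by
  rw [qq_def]
  rw [Finset.univ_unique, Finset.sum_singleton, parts_default_zero]
  simp [Tprod, pPoly, zNat]

lemma Dop_zero (t : F) : Dop t 0 = 1 := by
  rw [Dop_def']
  rw [Finset.univ_unique, Finset.sum_singleton, parts_default_zero]
  simp [Tprod, MfactN, Dm_zero]

lemma Dm_one {s : Multiset ℕ} (hs : s ≠ 0) : Dm s (1 : SymF) = 0 := by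
  obtain ⟨j, hj⟩ := Multiset.exists_mem_of_ne_zero hs
  have hcomm : Commute (pd j) (Dm (s.erase j)) := by
    apply Commute.list_prod_right
    intro x hx
    obtain ⟨b, -, rfl⟩ := List.mem_map.1 hx
    exact pd_commute j b
  have : Dm s = Dm (s.erase j) * pd j := by
    rw [← Multiset.cons_erase hj, Dm_cons, hcomm.eq]
    rw [Multiset.erase_cons_head]
  have hpd : pd j (1 : SymF) = 0 := by
    rw [pd_apply, pderiv_one]
  rw [this, Module.End.mul_apply, hpd, map_zero]

lemma Dop_one (t : F) {n : ℕ} (hn : 1 ≤ n) : Dop t n (1 : SymF) = 0 := by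
  rw [Dop_def', LinearMap.sum_apply]
  apply Finset.sum_eq_zero
  intro lam _
  have hne : lam.parts ≠ 0 := by
    intro h
    have := lam.parts_sum
    rw [h] at this
    simp at this
    omega
  rw [LinearMap.smul_apply, Dm_one hne, smul_zero]

lemma Dm_X (s : Multiset ℕ) (a : ℕ) :
    Dm s (X a : SymF) = if s = 0 then X a else if s = {a} then 1 else 0 := by
  induction s using Multiset.induction_on with
  | empty => rw [Dm_zero]; simp
  | cons j s ih =>
      have hc : Dm (j ::ₘ s) (X a : SymF) = pd j (Dm s (X a)) := by
        rw [Dm_cons]; rfl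
      rw [hc, ih]
      by_cases hs : s = 0
      · subst hs
        by_cases hja : j = a
        · subst hja
          simp [pd_apply, Multiset.cons_zero]
        · simp [pd_apply, pderiv_X_of_ne (Ne.symm hja), Multiset.cons_zero,
            Multiset.singleton_eq_cons_iff, hja]
      · rw [if_neg hs]
        by_cases hsa : s = {a}
        · rw [if_pos hsa]
          have h1 : pd j (1 : SymF) = 0 := by rw [pd_apply, pderiv_one]
          rw [h1]
          have : j ::ₘ s ≠ {a} := by
            subst hsa
            intro h
            have := congrArg Multiset.card h
            simp at this
          simp [this, Multiset.cons_ne_zero]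
        · rw [if_neg hsa, map_zero]
          have : j ::ₘ s ≠ {a} := by
            intro h
            have hcard := congrArg Multiset.card h
            simp at hcard
            exact hs hcard
          simp [this, Multiset.cons_ne_zero]

lemma Dop_X (t : F) {n : ℕ} (hn : 1 ≤ n) (a : ℕ) :
    Dop t n (X a : SymF) = if a = n then C (1 - t ^ n) else 0 := by
  rw [Dop_def', LinearMap.sum_apply]
  by_cases han : a = n
  · subst han
    rw [if_pos rfl]
    have hmem : ({a} : Multiset ℕ).sum = a := by simp
    set lam0 : Nat.Partition a :=
      ⟨{a}, fun hi => by rw [Multiset.mem_singleton] at hi; omega, hmem⟩ with hlam0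
    have hsingle := Finset.sum_eq_single (s := (Finset.univ : Finset (Nat.Partition a)))
      (f := fun d : Nat.Partition a =>
        ((Tprod t d.parts / (MfactN d.parts : F)) • Dm d.parts) (X a)) lam0
      ?_ ?_
    · rw [hsingle]
      rw [LinearMap.smul_apply]
      have hp : lam0.parts = {a} := rfl
      rw [hp, Dm_X, if_neg (by simp), if_pos rfl]
      have h1 : Tprod t {a} = 1 - t ^ a := by simp [Tprod]
      have h2 : MfactN {a} = 1 := by simp [MfactN]
      rw [h1, h2, Nat.cast_one, div_one, smul_eq_C_mul, mul_one]
    · intro lam _ hne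
      have hps : lam.parts ≠ {a} := by
        intro h
        exact hne (Nat.Partition.ext h)
      have hne0 : lam.parts ≠ 0 := by
        intro h
        have := lam.parts_sum
        rw [h] at this
        simp at this
        omega
      simp only [LinearMap.smul_apply, Dm_X, if_neg hne0, if_neg hps, smul_zero]
    · intro h
      exact absurd (Finset.mem_univ _) h
  · rw [if_neg han]
    apply Finset.sum_eq_zero
    intro lam _
    have hne0 : lam.parts ≠ 0 := by
      intro h
      have := lam.parts_sum
      rw [h] at this
      simp at this
      omega
    have hps : lam.parts ≠ {a} := by
      intro h
      have := lam.parts_sum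
      rw [h] at this
      simp at this
      omega
    rw [LinearMap.smul_apply, Dm_X, if_neg hne0, if_neg hps, smul_zero]
set_option synthInstance.maxHeartbeats 1000000
set_option maxHeartbeats 1000000

-- chunk 4: the two recurrences
instance : CharZero F := charZero_of_injective_algebraMap (algebraMap ℚ F).injective

lemma coef1 (t T : F) (j c z : ℕ) (hj : 0 < j) (hz : 0 < z) :
    ((c + 1 : ℕ) : F) * ((j : ℕ) : F) * ((1 - t ^ j) * T / (((j * ((c + 1) * z)) : ℕ) : F))
      = (1 - t ^ j) * (T / ((z : ℕ) : F)) := by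
  have h1 : ((j : ℕ) : F) ≠ 0 := Nat.cast_ne_zero.2 (by omega)
  have h2 : ((c + 1 : ℕ) : F) ≠ 0 := Nat.cast_ne_zero.2 (by omega)
  have h3 : ((z : ℕ) : F) ≠ 0 := Nat.cast_ne_zero.2 (by omega)
  push_cast
  push_cast at h1 h2 h3
  field_simp

lemma coef2 (t T : F) (j c z : ℕ) (hz : 0 < z) :
    ((c + 1 : ℕ) : F) * ((j : ℕ) : F) * ((1 - t ^ j) * T / ((((c + 1) * z) : ℕ) : F))
      = (j : F) * (1 - t ^ j) * (T / ((z : ℕ) : F)) := by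
  have h2 : ((c + 1 : ℕ) : F) ≠ 0 := Nat.cast_ne_zero.2 (by omega)
  have h3 : ((z : ℕ) : F) ≠ 0 := Nat.cast_ne_zero.2 (by omega)
  push_cast
  push_cast at h2 h3
  field_simp

lemma parts_sum_eq (s : Multiset ℕ) :
    s.sum = ∑ j ∈ s.toFinset, s.count j * j := by
  conv_lhs => rw [← Multiset.map_id s]
  rw [Finset.sum_multiset_map_count]
  simp [smul_eq_mul]

lemma qq_rec (t : F) (m : ℕ) :
    (m : F) • qq t m
      = ∑ j ∈ Finset.Icc 1 m, (1 - t ^ j) • ((X j : SymF) * qq t (m - j)) := by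
  have key : ∀ lam : m.Partition,
      (m : F) • ((Tprod t lam.parts / (zNat lam.parts : F)) • pPoly lam.parts)
        = ∑ j ∈ lam.parts.toFinset, (1 - t ^ j) •
            ((Tprod t (lam.parts.erase j) / (zNat (lam.parts.erase j) : F)) •
              ((X j : SymF) * pPoly (lam.parts.erase j))) := by
    intro lam
    have hm : (m : F)
        = ∑ j ∈ lam.parts.toFinset, ((lam.parts.count j : ℕ) : F) * ((j : ℕ) : F) := by
      have h1 : m = ∑ j ∈ lam.parts.toFinset, lam.parts.count j * j := by
        rw [← parts_sum_eq, lam.parts_sum]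
      have h2 := congrArg (fun x : ℕ => (x : F)) h1
      push_cast at h2
      exact h2
    rw [hm, Finset.sum_smul]
    apply Finset.sum_congr rfl
    intro j hj
    have hjmem : j ∈ lam.parts := Multiset.mem_toFinset.1 hj
    have hcons : lam.parts = j ::ₘ lam.parts.erase j := (Multiset.cons_erase hjmem).symm
    have hcount : lam.parts.count j = (lam.parts.erase j).count j + 1 := by
      conv_lhs => rw [hcons]
      rw [Multiset.count_cons_self]
    have hjpos : 0 < j := lam.parts_pos hjmem
    have hzpos : 0 < zNat (lam.parts.erase j) :=
      zNat_pos fun i hi => lam.parts_pos (Multiset.mem_of_mem_erase hi)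
    rw [smul_smul, smul_smul]
    conv_lhs => rw [hcons, Tprod_cons, zNat_cons, pPoly_cons, Multiset.count_cons_self]
    congr 1
    exact coef1 t (Tprod t (lam.parts.erase j)) j ((lam.parts.erase j).count j)
      (zNat (lam.parts.erase j)) hjpos hzpos
  rw [qq_def, Finset.smul_sum]
  rw [Finset.sum_congr rfl fun lam _ => key lam]
  rw [sum_partition_removal m
    (fun j ρ => (1 - t ^ j) • ((Tprod t ρ / (zNat ρ : F)) • ((X j : SymF) * pPoly ρ)))]
  apply Finset.sum_congr rfl
  intro j _
  rw [← Finset.smul_sum]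
  congr 1
  rw [qq_def, Finset.mul_sum]
  exact Finset.sum_congr rfl fun ρ _ => (mul_smul_comm _ _ _).symm

lemma pd_commute_Dm (j : ℕ) (s : Multiset ℕ) : Commute (pd j) (Dm s) := by
  apply Commute.list_prod_right
  intro x hx
  obtain ⟨b, -, rfl⟩ := List.mem_map.1 hx
  exact pd_commute j b

lemma pd_commute_Dop (j : ℕ) (t : F) (k : ℕ) : Commute (pd j) (Dop t k) := by
  rw [Dop_def']
  exact Commute.sum_right _ _ _ fun lam _ => (pd_commute_Dm j _).smul_right _

lemma Dop_rec (t : F) (k : ℕ) :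
    (k : F) • Dop t k
      = ∑ j ∈ Finset.Icc 1 k, ((j : F) * (1 - t ^ j)) • (Dop t (k - j) * pd j) := by
  have key : ∀ lam : k.Partition,
      (k : F) • ((Tprod t lam.parts / (MfactN lam.parts : F)) • Dm lam.parts)
        = ∑ j ∈ lam.parts.toFinset, ((j : F) * (1 - t ^ j)) •
            ((Tprod t (lam.parts.erase j) / (MfactN (lam.parts.erase j) : F)) •
              (pd j * Dm (lam.parts.erase j))) := by
    intro lam
    have hm : (k : F)
        = ∑ j ∈ lam.parts.toFinset, ((lam.parts.count j : ℕ) : F) * ((j : ℕ) : F) := by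
      have h1 : k = ∑ j ∈ lam.parts.toFinset, lam.parts.count j * j := by
        rw [← parts_sum_eq, lam.parts_sum]
      have h2 := congrArg (fun x : ℕ => (x : F)) h1
      push_cast at h2
      exact h2
    rw [hm, Finset.sum_smul]
    apply Finset.sum_congr rfl
    intro j hj
    have hjmem : j ∈ lam.parts := Multiset.mem_toFinset.1 hj
    have hcons : lam.parts = j ::ₘ lam.parts.erase j := (Multiset.cons_erase hjmem).symm
    have hcount : lam.parts.count j = (lam.parts.erase j).count j + 1 := by
      conv_lhs => rw [hcons]
      rw [Multiset.count_cons_self]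
    have hjpos : 0 < j := lam.parts_pos hjmem
    have hMpos : 0 < MfactN (lam.parts.erase j) :=
      Finset.prod_pos fun i _ => Nat.factorial_pos _
    rw [smul_smul, smul_smul]
    conv_lhs => rw [hcons, Tprod_cons, MfactN_cons, Dm_cons, Multiset.count_cons_self]
    congr 1
    exact coef2 t (Tprod t (lam.parts.erase j)) j ((lam.parts.erase j).count j)
      (MfactN (lam.parts.erase j)) hMpos
  rw [Dop_def', Finset.smul_sum]
  rw [Finset.sum_congr rfl fun lam _ => key lam]
  rw [sum_partition_removal k
    (fun j ρ => ((j : F) * (1 - t ^ j)) • ((Tprod t ρ / (MfactN ρ : F)) • (pd j * Dm ρ)))]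
  apply Finset.sum_congr rfl
  intro j _
  rw [← Finset.smul_sum]
  congr 1
  rw [Dop_def', Finset.sum_mul]
  exact Finset.sum_congr rfl fun ρ _ => by
    rw [smul_mul_assoc, (pd_commute_Dm j ρ.parts).eq]
-- chunk 5: multiplicativity of Dop
lemma antidiag_reindex {M : Type*} [AddCommMonoid M] (k : ℕ) (G : ℕ → ℕ → ℕ → M) :
    ∑ p ∈ Finset.HasAntidiagonal.antidiagonal k, ∑ c ∈ Finset.Icc 1 p.1, G c (p.1 - c) p.2
      = ∑ c ∈ Finset.Icc 1 k, ∑ p ∈ Finset.HasAntidiagonal.antidiagonal (k - c), G c p.1 p.2 := by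
  rw [Finset.sum_sigma', Finset.sum_sigma']
  refine Finset.sum_bij'
    (fun (x : Σ _p : ℕ × ℕ, ℕ) _hx => (⟨x.2, (x.1.1 - x.2, x.1.2)⟩ : Σ _c : ℕ, ℕ × ℕ))
    (fun (y : Σ _c : ℕ, ℕ × ℕ) _hy => (⟨(y.1 + y.2.1, y.2.2), y.1⟩ : Σ _p : ℕ × ℕ, ℕ))
    ?_ ?_ ?_ ?_ ?_
  · intro x hx
    obtain ⟨h1, h2⟩ := Finset.mem_sigma.1 hx
    rw [Finset.HasAntidiagonal.mem_antidiagonal] at h1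
    rw [Finset.mem_Icc] at h2
    refine Finset.mem_sigma.2 ⟨?_, ?_⟩
    · show x.2 ∈ Finset.Icc 1 k
      rw [Finset.mem_Icc]
      omega
    · show (x.1.1 - x.2, x.1.2) ∈ Finset.HasAntidiagonal.antidiagonal (k - x.2)
      rw [Finset.HasAntidiagonal.mem_antidiagonal]
      show x.1.1 - x.2 + x.1.2 = k - x.2
      omega
  · intro y hy
    obtain ⟨h1, h2⟩ := Finset.mem_sigma.1 hy
    rw [Finset.mem_Icc] at h1
    rw [Finset.HasAntidiagonal.mem_antidiagonal] at h2
    refine Finset.mem_sigma.2 ⟨?_, ?_⟩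
    · show (y.1 + y.2.1, y.2.2) ∈ Finset.HasAntidiagonal.antidiagonal k
      rw [Finset.HasAntidiagonal.mem_antidiagonal]
      show y.1 + y.2.1 + y.2.2 = k
      omega
    · show y.1 ∈ Finset.Icc 1 (y.1 + y.2.1)
      rw [Finset.mem_Icc]
      omega
  · intro x hx
    obtain ⟨h1, h2⟩ := Finset.mem_sigma.1 hx
    rw [Finset.HasAntidiagonal.mem_antidiagonal] at h1
    rw [Finset.mem_Icc] at h2
    refine Sigma.ext ?_ (heq_of_eq rfl)
    show (x.2 + (x.1.1 - x.2), x.1.2) = x.1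
    have : x.2 + (x.1.1 - x.2) = x.1.1 := by omega
    rw [this]
  · intro y hy
    refine Sigma.ext rfl (heq_of_eq ?_)
    show (y.1 + y.2.1 - y.1, y.2.2) = y.2
    have : y.1 + y.2.1 - y.1 = y.2.1 := by omega
    rw [this]
  · intro x hx
    rfl

lemma antidiag_reindex' {M : Type*} [AddCommMonoid M] (k : ℕ) (G : ℕ → ℕ → ℕ → M) :
    ∑ p ∈ Finset.HasAntidiagonal.antidiagonal k, ∑ c ∈ Finset.Icc 1 p.2, G c p.1 (p.2 - c)
      = ∑ c ∈ Finset.Icc 1 k, ∑ p ∈ Finset.HasAntidiagonal.antidiagonal (k - c), G c p.1 p.2 := by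
  rw [← Finset.Nat.sum_antidiagonal_swap]
  simp only [Prod.fst_swap, Prod.snd_swap]
  rw [antidiag_reindex k (fun c a b => G c b a)]
  apply Finset.sum_congr rfl
  intro c _
  rw [← Finset.Nat.sum_antidiagonal_swap]
  simp only [Prod.fst_swap, Prod.snd_swap]

lemma Dop_mul (t : F) (k : ℕ) : ∀ f g : SymF,
    Dop t k (f * g) = ∑ p ∈ Finset.HasAntidiagonal.antidiagonal k, Dop t p.1 f * Dop t p.2 g := by
  induction k using Nat.strong_induction_on with
  | _ k ih =>
  intro f g
  rcases Nat.eq_zero_or_pos k with hk0 | hkpos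
  · subst hk0
    rw [Dop_zero]
    rw [Finset.Nat.antidiagonal_zero, Finset.sum_singleton, Dop_zero]
    rfl
  · have hkF : (k : F) ≠ 0 := Nat.cast_ne_zero.2 (by omega)
    apply smul_right_injective SymF hkF
    show (k : F) • Dop t k (f * g)
      = (k : F) • ∑ p ∈ Finset.HasAntidiagonal.antidiagonal k, Dop t p.1 f * Dop t p.2 g
    have hL : (k : F) • Dop t k (f * g)
        = (∑ c ∈ Finset.Icc 1 k, ∑ p ∈ Finset.HasAntidiagonal.antidiagonal (k - c),
            ((c : F) * (1 - t ^ c)) • (Dop t p.1 (pd c f) * Dop t p.2 g))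
          + ∑ c ∈ Finset.Icc 1 k, ∑ p ∈ Finset.HasAntidiagonal.antidiagonal (k - c),
            ((c : F) * (1 - t ^ c)) • (Dop t p.1 f * Dop t p.2 (pd c g)) := by
      have h1 : (k : F) • Dop t k (f * g) = ((k : F) • Dop t k) (f * g) := rfl
      rw [h1, Dop_rec, LinearMap.sum_apply, ← Finset.sum_add_distrib]
      apply Finset.sum_congr rfl
      intro c hc
      have hlt : k - c < k := by
        rw [Finset.mem_Icc] at hc
        omega
      rw [LinearMap.smul_apply, Module.End.mul_apply]
      have hpd : pd c (f * g) = pd c f * g + f * pd c g := by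
        rw [pd_apply, pderiv_mul]
        rfl
      rw [hpd, map_add, ih (k - c) hlt (pd c f) g, ih (k - c) hlt f (pd c g), smul_add,
        Finset.smul_sum, Finset.smul_sum]
    have hR : (k : F) • ∑ p ∈ Finset.HasAntidiagonal.antidiagonal k, Dop t p.1 f * Dop t p.2 g
        = (∑ c ∈ Finset.Icc 1 k, ∑ p ∈ Finset.HasAntidiagonal.antidiagonal (k - c),
            ((c : F) * (1 - t ^ c)) • (Dop t p.1 (pd c f) * Dop t p.2 g))
          + ∑ c ∈ Finset.Icc 1 k, ∑ p ∈ Finset.HasAntidiagonal.antidiagonal (k - c),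
            ((c : F) * (1 - t ^ c)) • (Dop t p.1 f * Dop t p.2 (pd c g)) := by
      rw [← antidiag_reindex k (fun c a b => ((c : F) * (1 - t ^ c)) • (Dop t a (pd c f) * Dop t b g)),
        ← antidiag_reindex' k (fun c a b => ((c : F) * (1 - t ^ c)) • (Dop t a f * Dop t b (pd c g))),
        Finset.smul_sum, ← Finset.sum_add_distrib]
      apply Finset.sum_congr rfl
      intro p hp
      rw [Finset.HasAntidiagonal.mem_antidiagonal] at hp
      have hcast : (k : F) = (p.1 : F) + (p.2 : F) := by
        rw [← hp]
        push_cast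
        ring
      rw [hcast, add_smul]
      congr 1
      · -- (p.1 : F) • (Dop t p.1 f * Dop t p.2 g) = ∑ c ∈ Icc 1 p.1, ...
        have h2 : (p.1 : F) • (Dop t p.1 f * Dop t p.2 g)
            = (((p.1 : F) • Dop t p.1) f) * Dop t p.2 g := by
          rw [LinearMap.smul_apply, smul_mul_assoc]
        rw [h2, Dop_rec, LinearMap.sum_apply, Finset.sum_mul]
        apply Finset.sum_congr rfl
        intro c hc
        rw [LinearMap.smul_apply, Module.End.mul_apply, smul_mul_assoc]
      · have h2 : (p.2 : F) • (Dop t p.1 f * Dop t p.2 g)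
            = Dop t p.1 f * (((p.2 : F) • Dop t p.2) g) := by
          rw [LinearMap.smul_apply, mul_smul_comm]
        rw [h2, Dop_rec, LinearMap.sum_apply, Finset.mul_sum]
        apply Finset.sum_congr rfl
        intro c hc
        rw [LinearMap.smul_apply, Module.End.mul_apply, mul_smul_comm]
    rw [hL, hR]
-- chunk 6: the scalar recurrence for (m)_t
lemma parT_rec (t : F) (ht : t + 1 ≠ 0) (n : ℕ) (hn : 1 ≤ n) :
    (n : F) * parT t n = ∑ j ∈ Finset.Icc 1 n, (1 - t ^ j) ^ 2 * parT t (n - j) := by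
  obtain ⟨m, rfl⟩ : ∃ m, n = m + 1 := ⟨n - 1, by omega⟩
  have hre : ∑ j ∈ Finset.Icc 1 (m+1), (1 - t ^ j) ^ 2 * parT t (m + 1 - j)
      = (∑ i ∈ Finset.range m, (1 - t ^ (i+1)) ^ 2 * parT t (m - i))
        + (1 - t ^ (m+1)) ^ 2 := by
    rw [← Finset.Ico_add_one_right_eq_Icc, Finset.sum_Ico_eq_sum_range]
    have h1 : m + 1 + 1 - 1 = m + 1 := by omega
    rw [h1, Finset.sum_range_succ]
    congr 1
    · apply Finset.sum_congr rfl
      intro i hi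
      rw [Finset.mem_range] at hi
      have h2 : 1 + i = i + 1 := by omega
      rw [h2]
      have h3 : m + 1 - (i + 1) = m - i := by omega
      rw [h3]
    · have h2 : 1 + m = m + 1 := by omega
      rw [h2]
      have h3 : m + 1 - (m + 1) = 0 := by omega
      rw [h3]
      have h4 : parT t 0 = 1 := by rw [parT, if_pos rfl]
      rw [h4, mul_one]
  rw [hre]
  apply mul_left_cancel₀ ht
  have hv : ∀ s : ℕ, s ≠ 0 → (t + 1) * parT t s = (t - 1) * ((t^2) ^ s - 1) := by
    intro s hs
    rw [parT, if_neg hs]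
    have hg := geom_sum_mul (t^2) s
    have hp : (∑ j ∈ Finset.range s, t ^ (2*j)) = ∑ j ∈ Finset.range s, (t^2) ^ j :=
      Finset.sum_congr rfl fun j _ => pow_mul t 2 j
    rw [hp]
    linear_combination (t - 1) * hg
  -- per-term transformation
  have hterm : ∀ i ∈ Finset.range m,
      (t + 1) * ((1 - t ^ (i+1)) ^ 2 * parT t (m - i))
        = (t - 1) * (t^(2*(m-i)) + 2*t^(i+1) + t^(2*m+2) - 1 - 2*t^(2*m - i + 1) - t^(2*i+2)) := by
    intro i hi
    rw [Finset.mem_range] at hi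
    have hmi : m - i ≠ 0 := by omega
    rw [mul_left_comm, hv (m - i) hmi]
    have he0 : (t^2) ^ (m - i) = t^(2*(m-i)) := (pow_mul t 2 (m-i)).symm
    rw [he0]
    have he1 : t^(i+1) * t^(2*(m-i)) = t^(2*m - i + 1) := by
      rw [← pow_add]
      congr 1
      omega
    have he2 : t^(i+1) * t^(i+1) * t^(2*(m-i)) = t^(2*m+2) := by
      rw [← pow_add, ← pow_add]
      congr 1
      omega
    linear_combination (t - 1) * he2 - 2 * (t - 1) * he1
  -- sums of the individual monomials
  have hS1 : (∑ i ∈ Finset.range m, t^(2*(m-i))) = ∑ i ∈ Finset.range m, t^(2*i+2) := by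
    rw [← Finset.sum_range_reflect (fun j => t ^ (2*(m - j))) m]
    apply Finset.sum_congr rfl
    intro i hi
    rw [Finset.mem_range] at hi
    congr 1
    omega
  have hS2 : (∑ i ∈ Finset.range m, t^(i+1)) = (∑ i ∈ Finset.range m, t^i) * t := by
    rw [Finset.sum_mul]
    exact Finset.sum_congr rfl fun i _ => pow_succ t i
  have hS3 : (∑ i ∈ Finset.range m, t^(2*m - i + 1))
      = (∑ i ∈ Finset.range m, t^i) * (t^m * t^2) := by
    rw [← Finset.sum_range_reflect (fun j => t ^ (2*m - j + 1)) m, Finset.sum_mul]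
    apply Finset.sum_congr rfl
    intro i hi
    rw [Finset.mem_range] at hi
    rw [← pow_add, ← pow_add]
    congr 1
    omega
  have hbody : (∑ i ∈ Finset.range m,
        (t^(2*(m-i)) + 2*t^(i+1) + t^(2*m+2) - 1 - 2*t^(2*m - i + 1) - t^(2*i+2)))
      = 2*((∑ i ∈ Finset.range m, t^i) * t) + (m : F)*t^(2*m+2) - m
          - 2*((∑ i ∈ Finset.range m, t^i) * (t^m * t^2)) := by
    simp only [Finset.sum_add_distrib, Finset.sum_sub_distrib, ← Finset.mul_sum,
      Finset.sum_const, Finset.card_range, nsmul_eq_mul, hS1, hS2, hS3]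
    ring
  rw [mul_add, Finset.mul_sum, Finset.sum_congr rfl hterm, ← Finset.mul_sum, hbody]
  have hW : parT t (m+1) = (t-1)^2 * ∑ j ∈ Finset.range (m+1), (t^2) ^ j := by
    rw [parT, if_neg (Nat.succ_ne_zero m)]
    congr 1
    exact Finset.sum_congr rfl fun j _ => pow_mul t 2 j
  rw [hW]
  have hU := geom_sum_mul t m
  have hWrel := geom_sum_mul (t^2) (m+1)
  have hA : t^(2*m+2) = t^m * t^m * t^2 := by
    rw [← pow_add, ← pow_add]
    congr 1
    omega
  have hB : (t^2)^(m+1) = t^m * t^m * t^2 := by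
    rw [← pow_mul, ← pow_add, ← pow_add]
    congr 1
    omega
  have hC : t^(m+1) = t^m * t := by rw [pow_succ]
  rw [hA, hC]
  rw [hB] at hWrel
  push_cast
  linear_combination ((m : F) + 1) * (t - 1) * hWrel - (2 * t * (1 - t^m * t)) * hU
-- chunk 7: action of Dop on qq
lemma qqInt_ofNat (t : F) (a : ℕ) : qqInt t ((a : ℕ) : ℤ) = qq t a := by
  rw [qqInt, if_neg (by omega), Int.toNat_natCast]

lemma qqInt_neg (t : F) {z : ℤ} (hz : z < 0) : qqInt t z = 0 := if_pos hz

lemma Dop_X_mul (t : F) (n j : ℕ) (hj : 1 ≤ j) (g : SymF) :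
    ∑ p ∈ Finset.HasAntidiagonal.antidiagonal n, Dop t p.1 (X j : SymF) * Dop t p.2 g
      = X j * Dop t n g + (if j ≤ n then C (1 - t ^ j) * Dop t (n - j) g else 0) := by
  have hsplit : ∀ p ∈ Finset.HasAntidiagonal.antidiagonal n,
      Dop t p.1 (X j : SymF) * Dop t p.2 g
        = (if p.1 = 0 then X j * Dop t p.2 g else 0)
          + (if p.1 = j then C (1 - t ^ j) * Dop t p.2 g else 0) := by
    rintro ⟨a, b⟩ hp
    by_cases ha : a = 0
    · subst ha
      rw [if_pos rfl, if_neg (by omega), add_zero, Dop_zero]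
      rfl
    · rw [if_neg ha]
      have ha1 : 1 ≤ a := by omega
      rw [Dop_X t ha1 j]
      by_cases haj : j = a
      · subst haj
        rw [if_pos rfl, if_pos rfl, zero_add]
      · rw [if_neg haj, if_neg (fun h => haj h.symm), zero_mul, zero_add]
  rw [Finset.sum_congr rfl hsplit, Finset.sum_add_distrib]
  congr 1
  · apply Finset.sum_eq_single ((0, n) : ℕ × ℕ)
    · rintro ⟨a, b⟩ hp hne
      rw [Finset.HasAntidiagonal.mem_antidiagonal] at hp
      have : ¬(a = 0) := by
        intro h
        apply hne
        subst h
        simp at hp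
        rw [hp]
      rw [if_neg this]
    · intro h
      exact absurd (Finset.HasAntidiagonal.mem_antidiagonal.2 (by omega)) h
  · by_cases hjn : j ≤ n
    · rw [if_pos hjn]
      have h := Finset.sum_eq_single (s := Finset.HasAntidiagonal.antidiagonal n)
        (f := fun p : ℕ × ℕ => if p.1 = j then C (1 - t ^ j) * Dop t p.2 g else 0)
        ((j, n - j)) ?_ ?_
      · rw [h]
        simp
      · rintro ⟨a, b⟩ hp hne
        rw [Finset.HasAntidiagonal.mem_antidiagonal] at hp
        have : ¬(a = j) := by
          intro h'
          apply hne
          subst h'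
          have hb : b = n - a := by omega
          rw [hb]
        simp only [if_neg this]
      · intro h'
        exact absurd (Finset.HasAntidiagonal.mem_antidiagonal.2 (by omega)) h'
    · rw [if_neg hjn]
      apply Finset.sum_eq_zero
      rintro ⟨a, b⟩ hp
      rw [Finset.HasAntidiagonal.mem_antidiagonal] at hp
      rw [if_neg (by omega)]

lemma tq_add_one_ne : tq + 1 ≠ 0 := by
  have h1 : tq + 1 = algebraMap (Polynomial ℚ) F (Polynomial.X + 1) := by
    rw [map_add, RatFunc.algebraMap_X, map_one, tq]
  rw [h1]
  intro h
  rw [map_eq_zero_iff _ (RatFunc.algebraMap_injective ℚ)] at h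
  have := congrArg (Polynomial.eval 0) h
  simp at this

lemma Dop_qq : ∀ n m : ℕ, Dop tq n (qq tq m) = parT tq n • qqInt tq ((m : ℤ) - (n : ℤ)) := by
  have main : ∀ s : ℕ, ∀ n m : ℕ, n + m = s →
      Dop tq n (qq tq m) = parT tq n • qqInt tq ((m : ℤ) - (n : ℤ)) := by
    intro s
    induction s using Nat.strong_induction_on with
    | _ s ih =>
    intro n m hnm
    rcases Nat.eq_zero_or_pos n with hn0 | hnpos
    · subst hn0
      rw [Dop_zero]
      have h1 : (m : ℤ) - (0 : ℕ) = ((m : ℕ) : ℤ) := by push_cast; ring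
      rw [h1, qqInt_ofNat]
      have h2 : parT tq 0 = 1 := if_pos rfl
      rw [h2, one_smul]
      rfl
    rcases Nat.eq_zero_or_pos m with hm0 | hmpos
    · subst hm0
      rw [qq_zero, Dop_one tq hnpos, qqInt_neg tq (by push_cast; omega), smul_zero]
    -- main case : 1 ≤ n, 1 ≤ m
    have hmF : (m : F) ≠ 0 := Nat.cast_ne_zero.2 (by omega)
    apply smul_right_injective SymF hmF
    show (m : F) • Dop tq n (qq tq m) = (m : F) • (parT tq n • qqInt tq ((m : ℤ) - n))
    rw [← map_smul, qq_rec, map_sum]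
    have hterm : ∀ j ∈ Finset.Icc 1 m,
        Dop tq n ((1 - tq ^ j) • ((X j : SymF) * qq tq (m - j)))
          = (1 - tq ^ j) • ((X j : SymF) * (parT tq n • qqInt tq (((m : ℤ) - j) - n)))
            + (1 - tq ^ j) • (if j ≤ n then
                C (1 - tq ^ j) * (parT tq (n - j) • qqInt tq ((m : ℤ) - n)) else 0) := by
      intro j hj
      rw [Finset.mem_Icc] at hj
      rw [map_smul, Dop_mul, Dop_X_mul tq n j hj.1]
      rw [smul_add]
      refine congrArg₂ (· + ·) ?_ ?_
      · -- X j * Dop n (qq (m-j))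
        have e : ((m - j : ℕ) : ℤ) - (n : ℤ) = ((m : ℤ) - j) - n := by omega
        rw [ih (n + (m - j)) (by omega) n (m - j) rfl, e]
      · by_cases hjn : j ≤ n
        · rw [if_pos hjn, if_pos hjn]
          have e : ((m - j : ℕ) : ℤ) - ((n - j : ℕ) : ℤ) = (m : ℤ) - n := by omega
          rw [ih ((n - j) + (m - j)) (by omega) (n - j) (m - j) rfl, e]
        · rw [if_neg hjn, if_neg hjn]
    rw [Finset.sum_congr rfl hterm, Finset.sum_add_distrib]
    by_cases hnm' : n ≤ m
    · -- both sides reduce to multiples of qq (m - n)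
      have hq : qqInt tq ((m : ℤ) - n) = qq tq (m - n) := by
        have : (m : ℤ) - n = ((m - n : ℕ) : ℤ) := by push_cast [Nat.cast_sub hnm']; ring
        rw [this, qqInt_ofNat]
      rw [hq]
      have hsum1 : ∑ j ∈ Finset.Icc 1 m,
          (1 - tq ^ j) • ((X j : SymF) * (parT tq n • qqInt tq (((m : ℤ) - j) - n)))
            = parT tq n • (((m - n : ℕ) : F) • qq tq (m - n)) := by
        rw [← Finset.sum_subset (Finset.Icc_subset_Icc_right (by omega : m - n ≤ m) :
            Finset.Icc 1 (m - n) ⊆ Finset.Icc 1 m)]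
        · rw [qq_rec, Finset.smul_sum]
          apply Finset.sum_congr rfl
          intro j hj
          rw [Finset.mem_Icc] at hj
          have h1 : ((m : ℤ) - j) - n = ((m - n - j : ℕ) : ℤ) := by omega
          rw [h1, qqInt_ofNat]
          rw [mul_smul_comm, smul_smul, smul_smul]
          congr 1
          ring
        · intro j hjm hjn'
          rw [Finset.mem_Icc] at hjm
          rw [Finset.mem_Icc] at hjn'
          have : ((m : ℤ) - j) - n < 0 := by
            have hj2 : m - n < j := by omega
            omega
          rw [qqInt_neg tq this, smul_zero, mul_zero, smul_zero]
      have hsum2 : ∑ j ∈ Finset.Icc 1 m,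
          (1 - tq ^ j) • (if j ≤ n then
            C (1 - tq ^ j) * (parT tq (n - j) • qq tq (m - n)) else 0)
            = ((n : F) * parT tq n) • qq tq (m - n) := by
        rw [← Finset.sum_subset (Finset.Icc_subset_Icc_right hnm' :
            Finset.Icc 1 n ⊆ Finset.Icc 1 m)]
        · rw [parT_rec tq tq_add_one_ne n hnpos, Finset.sum_smul]
          apply Finset.sum_congr rfl
          intro j hj
          rw [Finset.mem_Icc] at hj
          rw [if_pos hj.2, MvPolynomial.C_mul', smul_smul, smul_smul]
          congr 1
          ring
        · intro j hjm hjn'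
          rw [Finset.mem_Icc] at hjm
          rw [Finset.mem_Icc] at hjn'
          rw [if_neg (by omega), smul_zero]
      rw [hsum1, hsum2, smul_smul, smul_smul, ← add_smul]
      congr 1
      push_cast [Nat.cast_sub hnm']
      ring
    · -- m < n : everything vanishes
      have hq : qqInt tq ((m : ℤ) - n) = 0 := qqInt_neg tq (by omega)
      rw [hq, smul_zero, smul_zero]
      rw [Finset.sum_eq_zero, Finset.sum_eq_zero, add_zero]
      · intro j hj
        rw [Finset.mem_Icc] at hj
        by_cases hjn : j ≤ n
        · rw [if_pos hjn, smul_zero, mul_zero, smul_zero]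
        · rw [if_neg hjn, smul_zero]
      · intro j hj
        rw [Finset.mem_Icc] at hj
        have : ((m : ℤ) - j) - n < 0 := by omega
        rw [qqInt_neg tq this, smul_zero, mul_zero, smul_zero]
  intro n m
  exact main (n + m) n m rfl

-- chunk 8: products over Fin l and the final theorem
lemma Dop_prod (t : F) (l : ℕ) : ∀ (k : ℕ) (f : Fin l → SymF),
    Dop t k (∏ a, f a)
      = ∑ τ ∈ Finset.Nat.antidiagonalTuple l k, ∏ a, Dop t (τ a) (f a) := by
  induction l with
  | zero =>
      intro k f
      rcases Nat.eq_zero_or_pos k with hk | hk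
      · subst hk
        rw [Dop_zero, Finset.Nat.antidiagonalTuple_zero_zero, Finset.sum_singleton]
        simp
      · obtain ⟨k', rfl⟩ : ∃ k', k = k' + 1 := ⟨k - 1, by omega⟩
        rw [Finset.Nat.antidiagonalTuple_zero_succ, Finset.sum_empty]
        have h1 : (∏ a : Fin 0, f a) = 1 := by simp
        rw [h1, Dop_one t hk]
  | succ l ihl =>
      intro k f
      rw [Fin.prod_univ_succ, Dop_mul]
      have hinner : ∀ p ∈ Finset.HasAntidiagonal.antidiagonal k,
          Dop t p.1 (f 0) * Dop t p.2 (∏ i : Fin l, f i.succ)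
            = ∑ σ ∈ Finset.Nat.antidiagonalTuple l p.2,
                Dop t p.1 (f 0) * ∏ i : Fin l, Dop t (σ i) (f i.succ) := by
        intro p _
        rw [ihl p.2 (fun i => f i.succ), Finset.mul_sum]
      rw [Finset.sum_congr rfl hinner]
      rw [Finset.sum_sigma']
      refine Finset.sum_bij'
        (fun (x : Σ _p : ℕ × ℕ, Fin l → ℕ) _hx => Fin.cons x.1.1 x.2)
        (fun (τ : Fin (l+1) → ℕ) _hτ =>
          (⟨(τ 0, ∑ i : Fin l, τ i.succ), fun i => τ i.succ⟩ : Σ _p : ℕ × ℕ, Fin l → ℕ))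
        ?_ ?_ ?_ ?_ ?_
      · intro x hx
        obtain ⟨h1, h2⟩ := Finset.mem_sigma.1 hx
        rw [Finset.HasAntidiagonal.mem_antidiagonal] at h1
        rw [Finset.Nat.mem_antidiagonalTuple] at h2
        rw [Finset.Nat.mem_antidiagonalTuple]
        rw [Fin.sum_univ_succ]
        simp only [Fin.cons_zero, Fin.cons_succ]
        rw [h2, h1]
      · intro τ hτ
        rw [Finset.Nat.mem_antidiagonalTuple] at hτ
        refine Finset.mem_sigma.2 ⟨?_, ?_⟩
        · show (τ 0, ∑ i : Fin l, τ i.succ) ∈ Finset.HasAntidiagonal.antidiagonal k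
          rw [Finset.HasAntidiagonal.mem_antidiagonal]
          rw [← hτ, Fin.sum_univ_succ]
        · show (fun i => τ i.succ) ∈ Finset.Nat.antidiagonalTuple l (τ 0, ∑ i : Fin l, τ i.succ).2
          rw [Finset.Nat.mem_antidiagonalTuple]
      · intro x hx
        obtain ⟨h1, h2⟩ := Finset.mem_sigma.1 hx
        rw [Finset.Nat.mem_antidiagonalTuple] at h2
        refine Sigma.ext ?_ (heq_of_eq ?_)
        · show ((Fin.cons x.1.1 x.2 : Fin (l+1) → ℕ) 0,
            ∑ i : Fin l, (Fin.cons x.1.1 x.2 : Fin (l+1) → ℕ) i.succ) = x.1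
          simp only [Fin.cons_zero, Fin.cons_succ]
          rw [h2]
        · show (fun i => (Fin.cons x.1.1 x.2 : Fin (l+1) → ℕ) i.succ) = x.2
          funext i
          simp only [Fin.cons_succ]
      · intro τ hτ
        exact Fin.cons_self_tail τ
      · intro x hx
        rw [Fin.prod_univ_succ]
        simp only [Fin.cons_zero, Fin.cons_succ]


/-- bitrace / dual Pieri for the `q_m` basis: for `k ≥ 1` and a
composition `μ = (μ_1,…,μ_l)`,
`q_k^*(q_{μ_1} ⋯ q_{μ_l}) = ∑_{τ ⊨ k} (∏_{a : τ_a > 0} (τ_a)_t) q_{μ_1-τ_1} ⋯ q_{μ_l-τ_l}`,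
where `τ` runs over tuples of `l` nonnegative integers summing to `k` and
`q_j = 0` for `j < 0`. -/
theorem qstar_qmu (k : ℕ) (hk : 1 ≤ k) (l : ℕ) (μ : Fin l → ℕ)
    (hpos : ∀ a, 0 < μ a) :
    Dop tq k (∏ a, qq tq (μ a))
      = ∑ τ ∈ Finset.Nat.antidiagonalTuple l k,
          (∏ a, parT tq (τ a)) • ∏ a, qqInt tq ((μ a : ℤ) - (τ a : ℤ)) := by
  rw [Dop_prod tq l k (fun a => qq tq (μ a))]
  apply Finset.sum_congr rfl
  intro τ _
  have h1 : ∀ a : Fin l, Dop tq (τ a) (qq tq (μ a))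
      = parT tq (τ a) • qqInt tq ((μ a : ℤ) - (τ a : ℤ)) := fun a => Dop_qq (τ a) (μ a)
  rw [Finset.prod_congr rfl fun a _ => h1 a]
  simp only [MvPolynomial.smul_eq_C_mul]
  rw [Finset.prod_mul_distrib, ← map_prod]

end
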